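/- Let $a,b,c,d\in[0,\infty)$ with $ad-bc\neq 0$, and define $f(x_1,x_2)=\frac{|ax_1-bx_2|+|cx_1-dx_2|}{|ad-bc|}$. Then the infimum of $f$ over the region $x_1\geq 1, x_2\geq 1$ equals $\min\{\max(1/a,1/b),\ \max(1/c,1/d),\ \frac{|a-b|+|c-d|}{|ad-bc|}\}$, with the convention that $1/0=+\infty$. -/

import Mathlib

open scoped ENNReal

/-- Key pointwise real inequality: with `ad-bc > 0`, at any point of the quadrant,
`F = |ax₁-bx₂| + |cx₁-dx₂|` dominates one of the three candidate minimum values. -/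
theorem key_real_aux (a b c d x1 x2 : ℝ) (ha : 0 ≤ a) (hb : 0 ≤ b) (hc : 0 ≤ c) (hd : 0 ≤ d)
    (hD : 0 < a * d - b * c) (hx1 : 1 ≤ x1) (hx2 : 1 ≤ x2) :
    (0 < a ∧ 0 < b ∧ a*d - b*c ≤ a * (|a*x1-b*x2| + |c*x1-d*x2|)
        ∧ a*d - b*c ≤ b * (|a*x1-b*x2| + |c*x1-d*x2|))
    ∨ (0 < c ∧ 0 < d ∧ a*d - b*c ≤ c * (|a*x1-b*x2| + |c*x1-d*x2|)
        ∧ a*d - b*c ≤ d * (|a*x1-b*x2| + |c*x1-d*x2|))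
    ∨ (|a-b| + |c-d| ≤ |a*x1-b*x2| + |c*x1-d*x2|) := by
  have ha' : 0 < a := by nlinarith [mul_nonneg hb hc]
  have hd' : 0 < d := by nlinarith [mul_nonneg hb hc]
  have e1 : 0 ≤ (a*d - b*c) * (x1 - 1) := mul_nonneg hD.le (sub_nonneg.2 hx1)
  have e2 : 0 ≤ (a*d - b*c) * (x2 - 1) := mul_nonneg hD.le (sub_nonneg.2 hx2)
  rcases le_total (a*x1-b*x2) 0 with hu | hu <;> rcases le_total (c*x1-d*x2) 0 with hv | hv
  · -- u ≤ 0, v ≤ 0 : case (A)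
    left
    have hb' : 0 < b := by
      rcases hb.eq_or_lt with rfl | h
      · nlinarith
      · exact h
    rw [abs_of_nonpos hu, abs_of_nonpos hv]
    refine ⟨ha', hb', ?_, ?_⟩ <;>
      nlinarith [mul_nonneg hc (neg_nonneg.2 hu), mul_nonneg hd (neg_nonneg.2 hu),
        mul_nonneg ha (neg_nonneg.2 hu), mul_nonneg hb (neg_nonneg.2 hu)]
  · -- u ≤ 0, v ≥ 0 : impossible
    exfalso
    nlinarith [mul_nonneg hd (neg_nonneg.2 hu), mul_nonneg hb hv]
  · -- u ≥ 0, v ≤ 0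
    rw [abs_of_nonneg hu, abs_of_nonpos hv]
    rcases lt_or_ge a c with hac | hac
    · -- (B)
      right; left
      have hc' : 0 < c := lt_of_lt_of_le ha' hac.le
      refine ⟨hc', hd', ?_, ?_⟩
      · nlinarith [mul_nonneg (sub_nonneg.2 hac.le) (neg_nonneg.2 hv)]
      · nlinarith [mul_nonneg (sub_nonneg.2 hac.le) (neg_nonneg.2 hv),
          mul_nonneg hc (sub_nonneg.2 hx1)]
    · rcases lt_or_ge d b with hdb | hdb
      · -- (A)
        left
        have hb' : 0 < b := lt_of_lt_of_le hd' hdb.le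
        refine ⟨ha', hb', ?_, ?_⟩
        · nlinarith [mul_nonneg (sub_nonneg.2 hdb.le) hu, mul_nonneg hd (sub_nonneg.2 hx2)]
        · nlinarith [mul_nonneg (sub_nonneg.2 hdb.le) hu]
      · -- a ≥ c, d ≥ b
        rcases lt_or_ge a b with hab | hab
        · -- (A), a < b
          left
          refine ⟨ha', lt_trans ha' hab, ?_, ?_⟩
          · nlinarith [mul_nonneg (sub_nonneg.2 hac) hu,
              mul_nonneg ha (mul_nonneg (sub_nonneg.2 hdb) (sub_nonneg.2 hx2))]
          · nlinarith [mul_nonneg (sub_nonneg.2 hac) hu, mul_nonneg (sub_nonneg.2 hab.le) hu,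
              mul_nonneg hb (mul_nonneg (sub_nonneg.2 hdb) (sub_nonneg.2 hx2))]
        · rcases lt_or_ge d c with hdc | hdc
          · -- (B), d < c
            right; left
            refine ⟨lt_trans hd' hdc, hd', ?_, ?_⟩
            · nlinarith [mul_nonneg (sub_nonneg.2 hdb) (neg_nonneg.2 hv),
                mul_nonneg hc (mul_nonneg (sub_nonneg.2 hac) (sub_nonneg.2 hx1))]
            · nlinarith [mul_nonneg (sub_nonneg.2 hdb) (neg_nonneg.2 hv),
                mul_nonneg hd (mul_nonneg (sub_nonneg.2 hac) (sub_nonneg.2 hx1))]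
          · -- (C)
            right; right
            rw [abs_of_nonneg (sub_nonneg.2 hab), abs_of_nonpos (sub_nonpos.2 hdc)]
            nlinarith [mul_nonneg (sub_nonneg.2 hac) (sub_nonneg.2 hx1),
              mul_nonneg (sub_nonneg.2 hdb) (sub_nonneg.2 hx2)]
  · -- u ≥ 0, v ≥ 0 : (B)
    right; left
    have hc' : 0 < c := by
      rcases hc.eq_or_lt with rfl | h
      · nlinarith [mul_nonneg ha hv]
      · exact h
    rw [abs_of_nonneg hu, abs_of_nonneg hv]
    refine ⟨hc', hd', ?_, ?_⟩ <;>
      nlinarith [mul_nonneg ha hv, mul_nonneg hb hv, mul_nonneg hc hv, mul_nonneg hd hv]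

/-- The pointwise lower bound, in `ℝ≥0∞`, assuming `ad - bc > 0`. -/
theorem lower_pt_aux (a b c d x1 x2 : ℝ) (ha : 0 ≤ a) (hb : 0 ≤ b) (hc : 0 ≤ c) (hd : 0 ≤ d)
    (hD : 0 < a * d - b * c) (hx1 : 1 ≤ x1) (hx2 : 1 ≤ x2) :
    min (min (max (ENNReal.ofReal a)⁻¹ (ENNReal.ofReal b)⁻¹)
             (max (ENNReal.ofReal c)⁻¹ (ENNReal.ofReal d)⁻¹))
        (ENNReal.ofReal ((|a - b| + |c - d|) / |a * d - b * c|))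
      ≤ ENNReal.ofReal ((|a * x1 - b * x2| + |c * x1 - d * x2|) / |a * d - b * c|) := by
  have habs : |a * d - b * c| = a * d - b * c := abs_of_pos hD
  rcases key_real_aux a b c d x1 x2 ha hb hc hd hD hx1 hx2 with
    ⟨ha', hb', h1, h2⟩ | ⟨hc', hd', h1, h2⟩ | h
  · refine le_trans (min_le_left _ _) (le_trans (min_le_left _ _) (max_le ?_ ?_))
    · rw [← ENNReal.ofReal_inv_of_pos ha']
      refine ENNReal.ofReal_le_ofReal ?_
      rw [habs, inv_eq_one_div, div_le_div_iff₀ ha' hD]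
      linarith
    · rw [← ENNReal.ofReal_inv_of_pos hb']
      refine ENNReal.ofReal_le_ofReal ?_
      rw [habs, inv_eq_one_div, div_le_div_iff₀ hb' hD]
      linarith
  · refine le_trans (min_le_left _ _) (le_trans (min_le_right _ _) (max_le ?_ ?_))
    · rw [← ENNReal.ofReal_inv_of_pos hc']
      refine ENNReal.ofReal_le_ofReal ?_
      rw [habs, inv_eq_one_div, div_le_div_iff₀ hc' hD]
      linarith
    · rw [← ENNReal.ofReal_inv_of_pos hd']
      refine ENNReal.ofReal_le_ofReal ?_
      rw [habs, inv_eq_one_div, div_le_div_iff₀ hd' hD]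
      linarith
  · refine le_trans (min_le_right _ _) (ENNReal.ofReal_le_ofReal ?_)
    exact div_le_div_of_nonneg_right h (abs_nonneg _)

/-- Upper bound by the first pair term, via an explicit point on the line `a x₁ = b x₂`. -/
theorem upper_pair_aux (a b c d : ℝ) (ha : 0 ≤ a) (hb : 0 ≤ b)
    (hdet : a * d - b * c ≠ 0) :
    (⨅ x1 ∈ Set.Ici (1:ℝ), ⨅ x2 ∈ Set.Ici (1:ℝ),
        ENNReal.ofReal ((|a * x1 - b * x2| + |c * x1 - d * x2|) / |a * d - b * c|))
      ≤ max (ENNReal.ofReal a)⁻¹ (ENNReal.ofReal b)⁻¹ := by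
  have hD : (0:ℝ) < |a * d - b * c| := abs_pos.2 hdet
  rcases ha.eq_or_lt with rfl | ha'
  · simp
  rcases hb.eq_or_lt with rfl | hb'
  · simp
  rcases le_total a b with hab | hab
  · have hx : (1:ℝ) ≤ b / a := (one_le_div ha').2 hab
    have step : (⨅ x1 ∈ Set.Ici (1:ℝ), ⨅ x2 ∈ Set.Ici (1:ℝ),
        ENNReal.ofReal ((|a * x1 - b * x2| + |c * x1 - d * x2|) / |a * d - b * c|))
        ≤ ENNReal.ofReal ((|a * (b/a) - b * 1| + |c * (b/a) - d * 1|) / |a * d - b * c|) :=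
      le_trans (iInf₂_le (b/a) hx) (iInf₂_le 1 le_rfl)
    have h1 : a * (b/a) - b * 1 = 0 := by field_simp; ring
    have h2 : |c * (b/a) - d * 1| = |a * d - b * c| / a := by
      rw [show c * (b/a) - d * 1 = -((a*d - b*c)/a) by field_simp; ring, abs_neg, abs_div,
        abs_of_pos ha']
    have h3 : (|a * d - b * c| / a) / |a * d - b * c| = a⁻¹ := by
      field_simp
    rw [h1, abs_zero, zero_add, h2, h3, ENNReal.ofReal_inv_of_pos ha'] at step
    exact le_trans step (le_max_left _ _)
  · have hx : (1:ℝ) ≤ a / b := (one_le_div hb').2 hab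
    have step : (⨅ x1 ∈ Set.Ici (1:ℝ), ⨅ x2 ∈ Set.Ici (1:ℝ),
        ENNReal.ofReal ((|a * x1 - b * x2| + |c * x1 - d * x2|) / |a * d - b * c|))
        ≤ ENNReal.ofReal ((|a * 1 - b * (a/b)| + |c * 1 - d * (a/b)|) / |a * d - b * c|) :=
      le_trans (iInf₂_le 1 le_rfl) (iInf₂_le (a/b) hx)
    have h1 : a * 1 - b * (a/b) = 0 := by field_simp; ring
    have h2 : |c * 1 - d * (a/b)| = |a * d - b * c| / b := by
      rw [show c * 1 - d * (a/b) = -((a*d - b*c)/b) by field_simp; ring, abs_neg, abs_div,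
        abs_of_pos hb']
    have h3 : (|a * d - b * c| / b) / |a * d - b * c| = b⁻¹ := by
      field_simp
    rw [h1, abs_zero, zero_add, h2, h3, ENNReal.ofReal_inv_of_pos hb'] at step
    exact le_trans step (le_max_right _ _)

/-- The infimum is symmetric under swapping the pairs `(a,b)` and `(c,d)`. -/
theorem inf_swap_aux (a b c d : ℝ) :
    (⨅ x1 ∈ Set.Ici (1:ℝ), ⨅ x2 ∈ Set.Ici (1:ℝ),
        ENNReal.ofReal ((|c * x1 - d * x2| + |a * x1 - b * x2|) / |c * b - d * a|))
      = (⨅ x1 ∈ Set.Ici (1:ℝ), ⨅ x2 ∈ Set.Ici (1:ℝ),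
        ENNReal.ofReal ((|a * x1 - b * x2| + |c * x1 - d * x2|) / |a * d - b * c|)) := by
  have hD : |c * b - d * a| = |a * d - b * c| := by
    rw [show c*b - d*a = -(a*d - b*c) by ring, abs_neg]
  refine iInf_congr fun x1 => iInf_congr fun _ => iInf_congr fun x2 => iInf_congr fun _ => ?_
  rw [hD, add_comm (|c * x1 - d * x2|)]

/-- For `a,b,c,d ≥ 0` with `ad - bc ≠ 0` and
`f(x₁,x₂) = (|ax₁-bx₂| + |cx₁-dx₂|)/|ad-bc|`, the infimum of `f` over `x₁,x₂ ≥ 1`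
equals `min{max(1/a,1/b), max(1/c,1/d), (|a-b|+|c-d|)/|ad-bc|}`, with `1/0 = ∞`
interpreted in the extended nonnegative reals. -/
theorem inf_piecewise_linear_on_quadrant
    (a b c d : ℝ) (ha : 0 ≤ a) (hb : 0 ≤ b) (hc : 0 ≤ c) (hd : 0 ≤ d)
    (hdet : a * d - b * c ≠ 0) :
    (⨅ x1 ∈ Set.Ici (1:ℝ), ⨅ x2 ∈ Set.Ici (1:ℝ),
        ENNReal.ofReal ((|a * x1 - b * x2| + |c * x1 - d * x2|) / |a * d - b * c|))
      = min (min (max (ENNReal.ofReal a)⁻¹ (ENNReal.ofReal b)⁻¹)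
                 (max (ENNReal.ofReal c)⁻¹ (ENNReal.ofReal d)⁻¹))
            (ENNReal.ofReal ((|a - b| + |c - d|) / |a * d - b * c|)) := by
  refine le_antisymm (le_min (le_min ?_ ?_) ?_) ?_
  · exact upper_pair_aux a b c d ha hb hdet
  · have hdet' : c * b - d * a ≠ 0 := fun h => hdet (by linarith)
    have := upper_pair_aux c d a b hc hd hdet'
    rwa [inf_swap_aux a b c d] at this
  · refine le_trans (le_trans (iInf₂_le 1 le_rfl) (iInf₂_le 1 le_rfl)) ?_
    simp
  · refine le_iInf₂ fun x1 hx1 => le_iInf₂ fun x2 hx2 => ?_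
    rw [Set.mem_Ici] at hx1 hx2
    rcases hdet.lt_or_gt with hneg | hpos
    · have h := lower_pt_aux c d a b x1 x2 hc hd ha hb (by nlinarith) hx1 hx2
      have hD : |c * b - d * a| = |a * d - b * c| := by
        rw [show c*b - d*a = -(a*d - b*c) by ring, abs_neg]
      rw [hD, add_comm (|c * x1 - d * x2|), min_comm (max (ENNReal.ofReal c)⁻¹ _),
        add_comm (|c - d|)] at h
      exact h
    · exact lower_pt_aux a b c d x1 x2 ha hb hc hd hpos hx1 hx2
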